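/- Let F be the c.d.f. of a nonnegative random variable B with finite mean and m₂(x) := E[(B∧x)²] = 2∫₀ˣ t·F̄(t)dt. If x_R = ∞ and the lower Matuszewska index satisfies β(F̄) > −2, then limsup_{x→∞} m₂(x)/(2E[B]·x·Ḡ(x)) < ∞, where Ḡ(x) = (1/E[B])∫ₓ^∞ F̄(t)dt. -/

import Mathlib

open Filter Set

/-- The set of admissible upper exponents in the definition of the upper Matuszewska index:
`a` belongs to the set if there is `C > 0` such that for each `μ* > 1`,
`f (μ x) ≤ C μ^a f x` for all `μ ∈ [1, μ*]` and all sufficiently large `x`. -/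
def upperMatSet (f : ℝ → ℝ) : Set ℝ :=
  {a | ∃ C > (0 : ℝ), ∀ μs > (1 : ℝ), ∃ X : ℝ, ∀ x ≥ X, ∀ μ ∈ Set.Icc (1 : ℝ) μs,
    f (μ * x) ≤ C * μ ^ a * f x}

/-- The upper Matuszewska index `α(f)` as an extended real number. -/
noncomputable def upperMat (f : ℝ → ℝ) : EReal :=
  sInf ((fun a : ℝ => (a : EReal)) '' upperMatSet f)

/-- The set of admissible lower exponents in the definition of the lower Matuszewska index. -/
def lowerMatSet (f : ℝ → ℝ) : Set ℝ :=
  {b | ∃ D > (0 : ℝ), ∀ μs > (1 : ℝ), ∃ X : ℝ, ∀ x ≥ X, ∀ μ ∈ Set.Icc (1 : ℝ) μs,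
    D * μ ^ b * f x ≤ f (μ * x)}

/-- The lower Matuszewska index `β(f)` as an extended real number. -/
noncomputable def lowerMat (f : ℝ → ℝ) : EReal :=
  sSup ((fun b : ℝ => (b : EReal)) '' lowerMatSet f)

open MeasureTheory

set_option maxHeartbeats 1000000

/-- Let `F` be the c.d.f. of a nonnegative random variable with finite
positive mean `EB = ∫₀^∞ F̄`, unbounded support, and `m₂(x) = 2∫₀ˣ t F̄(t) dt`.
If the lower Matuszewska index satisfies `β(F̄) > -2`, then
`limsup_{x→∞} m₂(x)/(2 EB x Ḡ(x)) < ∞`, where `Ḡ(x) = (1/EB)∫ₓ^∞ F̄`; i.e. the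
ratio is eventually bounded by some constant `C`. -/
theorem stmt18 (F : ℝ → ℝ) (hmono : Monotone F) (hF0 : F 0 = 0)
    (hFnn : ∀ x, 0 ≤ F x) (hFlt : ∀ x, F x < 1)
    (EB : ℝ) (hEBpos : 0 < EB)
    (hInt : MeasureTheory.IntegrableOn (fun t => 1 - F t) (Set.Ioi 0))
    (hEB : EB = ∫ t in Set.Ioi (0 : ℝ), (1 - F t))
    (hβ : ((-2 : ℝ) : EReal) < lowerMat (fun x => 1 - F x)) :
    ∃ C : ℝ, ∀ᶠ x in atTop,
      (2 * ∫ t in Set.Ioc (0 : ℝ) x, t * (1 - F t)) /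
          (2 * EB * x * ((∫ t in Set.Ioi x, (1 - F t)) / EB)) ≤ C := by
  set g : ℝ → ℝ := fun t => 1 - F t with hgdef
  have hgpos : ∀ t, 0 < g t := fun t => by simp only [hgdef]; linarith [hFlt t]
  have hgle1 : ∀ t, g t ≤ 1 := fun t => by simp only [hgdef]; linarith [hFnn t]
  have hganti : Antitone g := fun a c hac => by
    simp only [hgdef]; linarith [hmono hac]
  -- extract admissible exponent b > -2
  obtain ⟨_, ⟨b, hbset, rfl⟩, hb2⟩ := lt_sSup_iff.mp hβ
  have hb2' : (-2 : ℝ) < b := by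
    have h : ((-2 : ℝ) : EReal) < ((b : ℝ) : EReal) := hb2
    exact_mod_cast h
  obtain ⟨D, hD, hprop⟩ := hbset
  set b' : ℝ := min b (-1) with hb'def
  have hb'2 : (-2 : ℝ) < b' := lt_min hb2' (by norm_num)
  have hb'neg : b' ≤ 0 := le_trans (min_le_right _ _) (by norm_num)
  have hb'le : b' ≤ b := min_le_left _ _
  have hb2pos : 0 < b' + 2 := by linarith
  -- choose μ
  set m : ℝ := (2 / D) ^ (b' + 2)⁻¹ with hmdef
  have hmpos : 0 < m := Real.rpow_pos_of_pos (by positivity) _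
  set μ : ℝ := max 2 m with hμdef
  have hμ2 : (2 : ℝ) ≤ μ := le_max_left _ _
  have hμ1 : (1 : ℝ) < μ := lt_of_lt_of_le one_lt_two hμ2
  have hμpos : (0 : ℝ) < μ := lt_trans one_pos hμ1
  have hkey : 2 ≤ D * μ ^ (b' + 2) := by
    have h1 : m ^ (b' + 2) ≤ μ ^ (b' + 2) :=
      Real.rpow_le_rpow hmpos.le (le_max_right _ _) hb2pos.le
    have h2 : m ^ (b' + 2) = 2 / D := by
      rw [hmdef, Real.rpow_inv_rpow (by positivity) hb2pos.ne']
    have h3 : 2 / D ≤ μ ^ (b' + 2) := h2 ▸ h1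
    calc (2 : ℝ) = D * (2 / D) := by field_simp
      _ ≤ D * μ ^ (b' + 2) := mul_le_mul_of_nonneg_left h3 hD.le
  obtain ⟨X₀, hX₀⟩ := hprop μ hμ1
  set X : ℝ := max X₀ 1 with hXdef
  have hX1 : (1 : ℝ) ≤ X := le_max_right _ _
  have hXpos : (0 : ℝ) < X := lt_of_lt_of_le one_pos hX1
  set r : ℝ := D * μ ^ b' with hrdef
  have hrpos : 0 < r := mul_pos hD (Real.rpow_pos_of_pos hμpos _)
  have hrμ : 2 ≤ r * μ ^ 2 := by
    have : r * μ ^ 2 = D * μ ^ (b' + 2) := by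
      rw [hrdef, mul_assoc, ← Real.rpow_natCast μ 2, ← Real.rpow_add hμpos]
      norm_num
    linarith [hkey, this.ge, this.le]
  -- H1
  have H1 : ∀ y, X ≤ y → ∀ ν, 1 ≤ ν → ν ≤ μ → r * g y ≤ g (ν * y) := by
    intro y hy ν h1 h2
    have hp := hX₀ y (le_trans (le_max_left _ _) hy) ν ⟨h1, h2⟩
    have e1 : μ ^ b' ≤ ν ^ b' :=
      Real.rpow_le_rpow_of_nonpos (lt_of_lt_of_le one_pos h1) h2 hb'neg
    have e2 : ν ^ b' ≤ ν ^ b := Real.rpow_le_rpow_of_exponent_le h1 hb'le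
    have hgy := (hgpos y).le
    calc r * g y = D * μ ^ b' * g y := rfl
      _ ≤ D * ν ^ b * g y :=
          mul_le_mul_of_nonneg_right (mul_le_mul_of_nonneg_left (e1.trans e2) hD.le) hgy
      _ ≤ g (ν * y) := hp
  -- integrability
  have hgint : ∀ a : ℝ, 0 ≤ a → IntegrableOn g (Set.Ioi a) := fun a ha =>
    hInt.mono_set (Set.Ioi_subset_Ioi ha)
  have hgIoc : ∀ a c : ℝ, 0 ≤ a → IntegrableOn g (Set.Ioc a c) := fun a c ha =>
    (hgint a ha).mono_set Set.Ioc_subset_Ioi_self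
  have htgint : ∀ a c : ℝ, 0 ≤ a → IntegrableOn (fun t => t * g t) (Set.Ioc a c) := by
    intro a c ha
    refine Integrable.bdd_mul (c := c) (hgIoc a c ha) aestronglyMeasurable_id
      (((ae_restrict_iff' measurableSet_Ioc).2 (ae_of_all _ ?_)))
    intro t ht
    rw [Real.norm_eq_abs, abs_of_pos (lt_of_le_of_lt ha ht.1)]
    exact ht.2
  -- E1 : basic integral upper bound
  have E1 : ∀ a c : ℝ, 0 ≤ a → a ≤ c → (∫ t in Set.Ioc a c, t * g t) ≤ c ^ 2 * g a := by
    intro a c ha hac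
    have hc : 0 ≤ c := le_trans ha hac
    have h := setIntegral_mono_on (htgint a c ha)
      (integrableOn_const measure_Ioc_lt_top.ne) measurableSet_Ioc
      (fun t ht => mul_le_mul ht.2 (hganti ht.1.le) (hgpos t).le hc)
    rw [setIntegral_const, Real.volume_real_Ioc, smul_eq_mul,
      max_eq_left (by linarith)] at h
    have : (c - a) * (c * g a) ≤ c ^ 2 * g a := by
      nlinarith [hgpos a, mul_nonneg hc (hgpos a).le]
    linarith
  -- the combined block induction
  set c₀ : ℝ := X ^ 2 * g (μ * X) with hc₀def
  have hc₀pos : 0 < c₀ := mul_pos (pow_pos hXpos 2) (hgpos _)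
  have key : ∀ n : ℕ, ∀ x : ℝ, X ≤ x → x ≤ μ ^ (n + 1) * X →
      c₀ ≤ x ^ 2 * g x ∧ (∫ t in Set.Ioc X x, t * g t) ≤ μ ^ 2 * (x ^ 2 * g x) := by
    intro n
    induction n with
    | zero =>
      intro x hx1 hx2
      simp only [zero_add, pow_one] at hx2
      have hxpos : 0 < x := lt_of_lt_of_le hXpos hx1
      have hgx : g (μ * X) ≤ g x := hganti hx2
      constructor
      · have hXx2 : X ^ 2 ≤ x ^ 2 := by nlinarith [hXpos, hx1]
        calc c₀ = X ^ 2 * g (μ * X) := hc₀def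
          _ ≤ x ^ 2 * g (μ * X) := mul_le_mul_of_nonneg_right hXx2 (hgpos _).le
          _ ≤ x ^ 2 * g x := mul_le_mul_of_nonneg_left hgx (sq_nonneg x)
      · have e1 : (∫ t in Set.Ioc X x, t * g t) ≤ x ^ 2 * g X := E1 X x hXpos.le hx1
        have e2 : r * g X ≤ g ((x / X) * X) := by
          refine H1 X le_rfl (x / X) ((one_le_div hXpos).2 hx1) ?_
          rw [div_le_iff₀ hXpos]; linarith
        rw [div_mul_cancel₀ x hXpos.ne'] at e2
        have e3a : μ ^ 2 * (r * g X) ≤ μ ^ 2 * g x :=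
          mul_le_mul_of_nonneg_left e2 (sq_nonneg μ)
        have e3b : 2 * g X ≤ r * μ ^ 2 * g X :=
          mul_le_mul_of_nonneg_right hrμ (hgpos X).le
        have e3c : r * μ ^ 2 * g X = μ ^ 2 * (r * g X) := by ring
        have e3 : g X ≤ μ ^ 2 * g x := by linarith [hgpos X]
        calc (∫ t in Set.Ioc X x, t * g t) ≤ x ^ 2 * g X := e1
          _ ≤ x ^ 2 * (μ ^ 2 * g x) := mul_le_mul_of_nonneg_left e3 (sq_nonneg x)
          _ = μ ^ 2 * (x ^ 2 * g x) := by ring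
    | succ n ih =>
      intro x hx1 hx2
      by_cases hc : x ≤ μ ^ (n + 1) * X
      · exact ih x hx1 hc
      push_neg at hc
      set y : ℝ := x / μ with hydef
      have hμpow : μ ≤ μ ^ (n + 1) := by
        calc μ = μ ^ 1 := (pow_one μ).symm
          _ ≤ μ ^ (n + 1) := pow_le_pow_right₀ hμ1.le (Nat.le_add_left 1 n)
      have hyX : X ≤ y := by
        rw [hydef, le_div_iff₀ hμpos]
        nlinarith
      have hyB : y ≤ μ ^ (n + 1) * X := by
        rw [hydef, div_le_iff₀ hμpos]
        calc x ≤ μ ^ (n + 1 + 1) * X := hx2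
          _ = μ ^ (n + 1) * X * μ := by ring
      have hypos : 0 < y := lt_of_lt_of_le hXpos hyX
      have hxy : x = μ * y := by rw [hydef]; field_simp
      have hyx : y ≤ x := by rw [hxy]; nlinarith
      obtain ⟨ih1, ih2⟩ := ih y hyX hyB
      have hH : r * g y ≤ g (μ * y) := H1 y hyX μ hμ1.le le_rfl
      have hsq : x ^ 2 = μ ^ 2 * y ^ 2 := by rw [hxy]; ring
      have hgxy : g x = g (μ * y) := by rw [hxy]
      constructor
      · have : μ ^ 2 * y ^ 2 * (r * g y) ≤ μ ^ 2 * y ^ 2 * g (μ * y) :=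
          mul_le_mul_of_nonneg_left hH (by positivity)
        have h2 : 2 * (y ^ 2 * g y) ≤ (r * μ ^ 2) * (y ^ 2 * g y) :=
          mul_le_mul_of_nonneg_right hrμ (mul_nonneg (sq_nonneg y) (hgpos y).le)
        have hx2g : x ^ 2 * g x = μ ^ 2 * y ^ 2 * g (μ * y) := by
          rw [hsq, hgxy]
        have hring : μ ^ 2 * y ^ 2 * (r * g y) = r * μ ^ 2 * (y ^ 2 * g y) := by ring
        linarith [hc₀pos, ih1]
      · have hsplit : (∫ t in Set.Ioc X x, t * g t)
            = (∫ t in Set.Ioc X y, t * g t) + ∫ t in Set.Ioc y x, t * g t := by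
          rw [← setIntegral_union (Set.Ioc_disjoint_Ioc_of_le le_rfl) measurableSet_Ioc
            (htgint X y hXpos.le) (htgint y x hypos.le),
            Set.Ioc_union_Ioc_eq_Ioc hyX hyx]
        have e2 : (∫ t in Set.Ioc y x, t * g t) ≤ x ^ 2 * g y := E1 y x hypos.le hyx
        have e3 : 2 * g y ≤ μ ^ 2 * g x := by
          rw [hgxy]
          have a1 : μ ^ 2 * (r * g y) ≤ μ ^ 2 * g (μ * y) :=
            mul_le_mul_of_nonneg_left hH (sq_nonneg μ)
          have a2 : 2 * g y ≤ r * μ ^ 2 * g y :=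
            mul_le_mul_of_nonneg_right hrμ (hgpos y).le
          have a3 : r * μ ^ 2 * g y = μ ^ 2 * (r * g y) := by ring
          linarith
        have e4 : (∫ t in Set.Ioc X y, t * g t) ≤ x ^ 2 * g y := by
          calc (∫ t in Set.Ioc X y, t * g t) ≤ μ ^ 2 * (y ^ 2 * g y) := ih2
            _ = x ^ 2 * g y := by rw [hsq]; ring
        calc (∫ t in Set.Ioc X x, t * g t)
            = (∫ t in Set.Ioc X y, t * g t) + ∫ t in Set.Ioc y x, t * g t := hsplit
          _ ≤ x ^ 2 * (2 * g y) := by linarith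
          _ ≤ x ^ 2 * (μ ^ 2 * g x) := mul_le_mul_of_nonneg_left e3 (sq_nonneg x)
          _ = μ ^ 2 * (x ^ 2 * g x) := by ring
  -- global consequence
  have main : ∀ x : ℝ, X ≤ x →
      c₀ ≤ x ^ 2 * g x ∧ (∫ t in Set.Ioc X x, t * g t) ≤ μ ^ 2 * (x ^ 2 * g x) := by
    intro x hx
    obtain ⟨n, _, hn2⟩ := exists_nat_pow_near ((one_le_div hXpos).2 hx) hμ1
    exact key n x hx ((div_le_iff₀ hXpos).1 hn2.le)
  -- lower bound for the tail integral
  have H2 : ∀ x : ℝ, X ≤ x → (μ - 1) * r * (x ^ 2 * g x) ≤ x * ∫ t in Set.Ioi x, g t := by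
    intro x hx
    have hxpos : 0 < x := lt_of_lt_of_le hXpos hx
    have hxμ : x ≤ μ * x := by nlinarith
    have h1 : (μ * x - x) * g (μ * x) ≤ ∫ t in Set.Ioc x (μ * x), g t := by
      have h := setIntegral_mono_on
        (integrableOn_const measure_Ioc_lt_top.ne)
        (hgIoc x (μ * x) hxpos.le) measurableSet_Ioc
        (fun t ht => hganti ht.2)
      rw [setIntegral_const, Real.volume_real_Ioc, smul_eq_mul,
        max_eq_left (by linarith)] at h
      exact h
    have h2 : (∫ t in Set.Ioc x (μ * x), g t) ≤ ∫ t in Set.Ioi x, g t := by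
      refine setIntegral_mono_set (hgint x hxpos.le) ?_
        (HasSubset.Subset.eventuallyLE Set.Ioc_subset_Ioi_self)
      exact Eventually.of_forall fun t => (hgpos t).le
    have h3 : r * g x ≤ g (μ * x) := H1 x hx μ hμ1.le le_rfl
    have h4 : (μ - 1) * x * (r * g x) ≤ (μ - 1) * x * g (μ * x) :=
      mul_le_mul_of_nonneg_left h3 (by nlinarith)
    have h5 : (μ - 1) * x * g (μ * x) = (μ * x - x) * g (μ * x) := by ring
    have h6 : (μ - 1) * x * (r * g x) ≤ ∫ t in Set.Ioi x, g t := by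
      linarith [h4, h1, h2, h5.le, h5.ge]
    calc (μ - 1) * r * (x ^ 2 * g x) = x * ((μ - 1) * x * (r * g x)) := by ring
      _ ≤ x * ∫ t in Set.Ioi x, g t := mul_le_mul_of_nonneg_left h6 hxpos.le
  -- finish
  set K : ℝ := X ^ 2 / c₀ + μ ^ 2 with hKdef
  have hKpos : 0 < K := by positivity
  refine ⟨K / ((μ - 1) * r), ?_⟩
  have hcr : 0 < (μ - 1) * r := mul_pos (by linarith) hrpos
  filter_upwards [eventually_ge_atTop X] with x hx
  have hxpos : 0 < x := lt_of_lt_of_le hXpos hx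
  show (2 * ∫ t in Set.Ioc (0 : ℝ) x, t * g t) /
      (2 * EB * x * ((∫ t in Set.Ioi x, g t) / EB)) ≤ K / ((μ - 1) * r)
  set I : ℝ := ∫ t in Set.Ioi x, g t with hIdef
  set N : ℝ := ∫ t in Set.Ioc (0 : ℝ) x, t * g t with hNdef
  obtain ⟨h1, h2⟩ := main x hx
  have hI2 : (μ - 1) * r * (x ^ 2 * g x) ≤ x * I := H2 x hx
  have hxI : 0 < x * I :=
    lt_of_lt_of_le (mul_pos hcr (mul_pos (pow_pos hxpos 2) (hgpos x))) hI2
  have hNsplit : N = (∫ t in Set.Ioc (0 : ℝ) X, t * g t) + ∫ t in Set.Ioc X x, t * g t := by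
    rw [hNdef, ← setIntegral_union (Set.Ioc_disjoint_Ioc_of_le le_rfl) measurableSet_Ioc
      (htgint 0 X le_rfl) (htgint X x hXpos.le),
      Set.Ioc_union_Ioc_eq_Ioc hXpos.le hx]
  have e0 : (∫ t in Set.Ioc (0 : ℝ) X, t * g t) ≤ X ^ 2 := by
    have := E1 0 X le_rfl hXpos.le
    have hg0 : g 0 = 1 := by simp [hgdef, hF0]
    rw [hg0, mul_one] at this
    exact this
  have hNle : N ≤ K * (x ^ 2 * g x) := by
    have hA : X ^ 2 ≤ X ^ 2 / c₀ * (x ^ 2 * g x) := by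
      rw [div_mul_eq_mul_div, le_div_iff₀ hc₀pos]
      exact mul_le_mul_of_nonneg_left h1 (sq_nonneg X)
    calc N = (∫ t in Set.Ioc (0 : ℝ) X, t * g t) + ∫ t in Set.Ioc X x, t * g t := hNsplit
      _ ≤ X ^ 2 / c₀ * (x ^ 2 * g x) + μ ^ 2 * (x ^ 2 * g x) := add_le_add (e0.trans hA) h2
      _ = K * (x ^ 2 * g x) := by rw [hKdef]; ring
  have hfinal : N ≤ K / ((μ - 1) * r) * (x * I) := by
    calc N ≤ K * (x ^ 2 * g x) := hNle
      _ = K / ((μ - 1) * r) * ((μ - 1) * r * (x ^ 2 * g x)) := by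
          rw [div_mul_eq_mul_div, mul_div_assoc, mul_div_cancel_left₀ _ hcr.ne']
      _ ≤ K / ((μ - 1) * r) * (x * I) :=
          mul_le_mul_of_nonneg_left hI2 (by positivity)
  have hden : 2 * EB * x * (I / EB) = 2 * (x * I) := by
    field_simp
  rw [hden, div_le_iff₀ (by positivity)]
  linarith [hfinal]
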